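/- Let n be even and let A be an abelian group of order n such that, in the degree-n action of G = D(A) on the cosets of H = ⟨x⟩, the subgroup A contains odd permutations (i.e., A is not contained in Alt(n)). Let τ be any derangement in the coset xA. If C is an inverse-closed set of derangements with ((A ∩ Alt(n)) ∪ τ(A ∩ Alt(n))) \ {1} ⊆ C ⊆ Der(G), then α(Cay(G, C)) = 2. -/

import Mathlib

/-- The Cayley graph of a group `Γ` with (inverse-closed) connection set `C`:
`g` and `h` are adjacent iff they are distinct and `g⁻¹ * h ∈ C` (symmetrized). -/
def cayley (Γ : Type*) [Group Γ] (C : Set Γ) : SimpleGraph Γ where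
  Adj g h := g ≠ h ∧ g⁻¹ * h ∈ C ∧ h⁻¹ * g ∈ C
  symm := ⟨fun _ _ ⟨hne, h1, h2⟩ => ⟨hne.symm, h2, h1⟩⟩
  loopless := ⟨fun _ ⟨hne, _⟩ => hne rfl⟩

/-- A set of vertices of a graph is independent if its elements are pairwise non-adjacent. -/
def IsIndepSet {V : Type*} (X : SimpleGraph V) (s : Set V) : Prop :=
  s.Pairwise fun a b => ¬ X.Adj a b

/-- The independence number of a graph: the maximum size of an independent set. -/
noncomputable def indepNum {V : Type*} (X : SimpleGraph V) : ℕ :=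
  sSup {k | ∃ s : Finset V, IsIndepSet X ↑s ∧ s.card = k}

/-- The set of derangements of a permutation group `G ≤ Sym(n)`: the elements of `G`
fixing no point of `{1,…,n}`. -/
def der {n : ℕ} (G : Subgroup (Equiv.Perm (Fin n))) : Set G :=
  {σ : G | ∀ i : Fin n, (σ : Equiv.Perm (Fin n)) i ≠ i}
/-- The set of derangements of the action of `G` on the left cosets of `H`:
the elements of `G` fixing no coset. -/
def derQ (G : Type*) [Group G] (H : Subgroup G) : Set G :=
  {g : G | ∀ c : G ⧸ H, g • c ≠ c}

/-- Let `n` be even, `A` abelian of order `n`, and `G = D(A)` (presented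
abstractly), acting on the `n` left cosets of `H = ⟨x⟩`; suppose the permutations of the
cosets induced by `A` include odd ones. Let `τ` be any derangement in the coset `xA`.
If `C` is an inverse-closed set of derangements with
`((A ∩ Alt(n)) ∪ τ(A ∩ Alt(n))) \ {1} ⊆ C ⊆ Der(G)`, then `α(Cay(G, C)) = 2`. -/
theorem stmt_14 {G : Type*} [Group G] [Fintype G]
    (A : Subgroup G) (hcomm : ∀ a ∈ A, ∀ b ∈ A, a * b = b * a)
    (hEven : Even (Nat.card A))
    (x : G) (hx2 : x ^ 2 = 1) (hxA : x ∉ A) (hindex : A.index = 2)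
    (hconj : ∀ a ∈ A, x * a * x = a⁻¹)
    [Fintype (G ⧸ Subgroup.zpowers x)] [DecidableEq (G ⧸ Subgroup.zpowers x)]
    (hAodd : ∃ a ∈ A,
      Equiv.Perm.sign (MulAction.toPermHom G (G ⧸ Subgroup.zpowers x) a) = -1)
    (τ : G) (hτ : x⁻¹ * τ ∈ A) (hτder : τ ∈ derQ G (Subgroup.zpowers x))
    (C : Set G) (hCinv : ∀ c ∈ C, c⁻¹ ∈ C)
    (hC1 : ∀ g : G, g ≠ 1 →
      ((g ∈ A ∧ Equiv.Perm.sign (MulAction.toPermHom G (G ⧸ Subgroup.zpowers x) g) = 1) ∨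
       (∃ a ∈ A,
          Equiv.Perm.sign (MulAction.toPermHom G (G ⧸ Subgroup.zpowers x) a) = 1 ∧
          g = τ * a)) →
      g ∈ C)
    (hC2 : C ⊆ derQ G (Subgroup.zpowers x)) :
    indepNum (cayley G C) = 2 := by
  classical
  set φ : G →* ℤˣ :=
    (Equiv.Perm.sign).comp (MulAction.toPermHom G (G ⧸ Subgroup.zpowers x)) with hφdef
  have hxinv : x⁻¹ = x := by
    have : x * x = 1 := by rw [← sq]; exact hx2
    exact inv_eq_of_mul_eq_one_right this
  set a₀ : G := x⁻¹ * τ with ha₀def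
  have hτeq : τ = x * a₀ := by rw [ha₀def]; group
  have hτsq : τ * τ = 1 := by
    have h := hconj a₀ hτ
    calc τ * τ = (x * a₀ * x) * a₀ := by rw [hτeq]; group
    _ = a₀⁻¹ * a₀ := by rw [h]
    _ = 1 := inv_mul_cancel a₀
  have hτinv : τ⁻¹ = τ := inv_eq_of_mul_eq_one_right hτsq
  have hτA : τ ∉ A := by
    intro h
    exact hxA (by simpa [hτeq] using A.mul_mem h (A.inv_mem hτ))
  -- conjugation by τ inverts A
  have hτconj : ∀ c ∈ A, τ * c * τ = c⁻¹ := by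
    intro c hc
    have h := hconj (a₀ * c) (A.mul_mem hτ hc)
    calc τ * c * τ = (x * (a₀ * c) * x) * a₀ := by rw [hτeq]; group
    _ = (a₀ * c)⁻¹ * a₀ := by rw [h]
    _ = c⁻¹ := by group
  -- cosets: g ∉ A → τ * g ∈ A
  have hcoset : ∀ g : G, g ∉ A → τ * g ∈ A := by
    intro g hg
    rw [Subgroup.mul_mem_iff_of_index_two hindex]
    exact iff_of_false hτA hg
  -- membership criteria for C
  have memC_A : ∀ g ∈ A, g ≠ 1 → φ g = 1 → g ∈ C := by
    intro g hg h1 hs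
    exact hC1 g h1 (Or.inl ⟨hg, hs⟩)
  have memC_τ : ∀ a ∈ A, φ a = 1 → τ * a ≠ 1 → τ * a ∈ C := by
    intro a ha hs h1
    exact hC1 _ h1 (Or.inr ⟨a, ha, hs, rfl⟩)
  have hsgn : ∀ g : G, φ g = 1 ∨ φ g = -1 := fun g => Int.units_eq_one_or (φ g)
  -- key combinatorial lemma
  have key : ∀ u v : G, u ≠ 1 → v ≠ 1 → u ≠ v → u ∈ C ∨ v ∈ C ∨ u⁻¹ * v ∈ C := by
    intro u v hu1 hv1 huv
    by_cases hu : u ∈ A <;> by_cases hv : v ∈ A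
    · rcases hsgn u with hsu | hsu
      · exact Or.inl (memC_A u hu hu1 hsu)
      rcases hsgn v with hsv | hsv
      · exact Or.inr (Or.inl (memC_A v hv hv1 hsv))
      refine Or.inr (Or.inr (memC_A _ (A.mul_mem (A.inv_mem hu) hv) ?_ ?_))
      · simpa [inv_mul_eq_one] using huv
      · rw [map_mul, map_inv, hsu, hsv]; rfl
    · -- u ∈ A, v ∉ A : write v = τ * b
      set b : G := τ * v with hbdef
      have hb : b ∈ A := hcoset v hv
      have hveq : v = τ * b := by rw [hbdef, ← mul_assoc, hτsq, one_mul]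
      rcases hsgn u with hsu | hsu
      · exact Or.inl (memC_A u hu hu1 hsu)
      rcases hsgn b with hsb | hsb
      · refine Or.inr (Or.inl (hveq ▸ memC_τ b hb hsb (hveq ▸ hv1)))
      -- u⁻¹ * v = τ * (u * b)
      have heq : u⁻¹ * v = τ * (u * b) := by
        have h := hτconj u hu
        have hct : τ * u = u⁻¹ * τ := by
          conv_rhs => rw [← h]
          rw [mul_assoc, hτsq, mul_one]
        rw [hveq, ← mul_assoc, ← hct, mul_assoc]
      have hne1 : u⁻¹ * v ≠ 1 := by
        intro h; exact hv (by rw [inv_mul_eq_one] at h; exact h ▸ hu)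
      refine Or.inr (Or.inr ?_)
      rw [heq] at hne1 ⊢
      refine memC_τ _ (A.mul_mem hu hb) ?_ hne1
      rw [map_mul, hsu, hsb]; rfl
    · -- u ∉ A, v ∈ A : write u = τ * a
      set a : G := τ * u with hadef
      have ha : a ∈ A := hcoset u hu
      have hueq : u = τ * a := by rw [hadef, ← mul_assoc, hτsq, one_mul]
      rcases hsgn a with hsa | hsa
      · exact Or.inl (hueq ▸ memC_τ a ha hsa (hueq ▸ hu1))
      rcases hsgn v with hsv | hsv
      · exact Or.inr (Or.inl (memC_A v hv hv1 hsv))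
      have heq : u⁻¹ * v = τ * (a * v) := by
        have h := hτconj a ha
        have hct : τ * a = a⁻¹ * τ := by
          conv_rhs => rw [← h]
          rw [mul_assoc, hτsq, mul_one]
        rw [hueq, mul_inv_rev, hτinv, ← hct, mul_assoc]
      have hne1 : u⁻¹ * v ≠ 1 := by
        intro h; exact hu (by rw [inv_mul_eq_one] at h; exact h ▸ hv)
      refine Or.inr (Or.inr ?_)
      rw [heq] at hne1 ⊢
      refine memC_τ _ (A.mul_mem ha hv) ?_ hne1
      rw [map_mul, hsa, hsv]; rfl
    · -- u ∉ A, v ∉ A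
      set a : G := τ * u with hadef
      set b : G := τ * v with hbdef
      have ha : a ∈ A := hcoset u hu
      have hb : b ∈ A := hcoset v hv
      have hueq : u = τ * a := by rw [hadef, ← mul_assoc, hτsq, one_mul]
      have hveq : v = τ * b := by rw [hbdef, ← mul_assoc, hτsq, one_mul]
      rcases hsgn a with hsa | hsa
      · exact Or.inl (hueq ▸ memC_τ a ha hsa (hueq ▸ hu1))
      rcases hsgn b with hsb | hsb
      · exact Or.inr (Or.inl (hveq ▸ memC_τ b hb hsb (hveq ▸ hv1)))
      have heq : u⁻¹ * v = a⁻¹ * b := by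
        rw [hueq, hveq]; group
      have hne1 : u⁻¹ * v ≠ 1 := by
        simpa [inv_mul_eq_one] using huv
      refine Or.inr (Or.inr ?_)
      rw [heq] at hne1 ⊢
      refine memC_A _ (A.mul_mem (A.inv_mem ha) hb) hne1 ?_
      rw [map_mul, map_inv, hsa, hsb]; rfl
  -- x ∉ C
  have hxC : x ∉ C := by
    intro h
    have hd := hC2 h ((1:G) : G ⧸ Subgroup.zpowers x)
    apply hd
    have : x • ((1:G) : G ⧸ Subgroup.zpowers x) = ((x * 1 : G) : G ⧸ Subgroup.zpowers x) := rfl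
    rw [this, mul_one, QuotientGroup.eq]
    simpa using Subgroup.inv_mem _ (Subgroup.mem_zpowers x)
  -- upper bound
  have upper : ∀ s : Finset G, IsIndepSet (cayley G C) ↑s → s.card ≤ 2 := by
    intro s hs
    by_contra hlt
    push_neg at hlt
    obtain ⟨g, hg, h, hh, k, hk, hgh, hgk, hhk⟩ := Finset.two_lt_card.mp hlt
    have nonadj : ∀ p ∈ s, ∀ q ∈ s, p ≠ q → p⁻¹ * q ∉ C := by
      intro p hp q hq hpq hmem
      exact hs hp hq hpq ⟨hpq, hmem, by
        have := hCinv _ hmem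
        simpa [mul_inv_rev] using this⟩
    have h1 := nonadj g hg h hh hgh
    have h2 := nonadj g hg k hk hgk
    have h3 := nonadj h hh k hk hhk
    have hu1 : g⁻¹ * h ≠ 1 := by simpa [inv_mul_eq_one] using hgh
    have hv1 : g⁻¹ * k ≠ 1 := by simpa [inv_mul_eq_one] using hgk
    have huv : g⁻¹ * h ≠ g⁻¹ * k := by
      intro hE; exact hhk (mul_left_cancel hE)
    rcases key _ _ hu1 hv1 huv with hc | hc | hc
    · exact h1 hc
    · exact h2 hc
    · apply h3; convert hc using 1; group
  -- the set {1, x} is independent of size 2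
  have hx1 : (1:G) ≠ x := by intro h; exact hxA (h ▸ A.one_mem)
  have hTwo : (2 : ℕ) ∈ {k | ∃ s : Finset G, IsIndepSet (cayley G C) ↑s ∧ s.card = k} := by
    refine ⟨{1, x}, ?_, by rw [Finset.card_insert_of_notMem (by simpa using hx1),
      Finset.card_singleton]⟩
    intro p hp q hq hpq
    simp only [Finset.coe_insert, Finset.coe_singleton, Set.mem_insert_iff,
      Set.mem_singleton_iff] at hp hq
    have hnadj : ¬ (cayley G C).Adj 1 x := by
      rintro ⟨-, hmem, -⟩
      exact hxC (by simpa using hmem)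
    rcases hp with rfl | rfl <;> rcases hq with rfl | rfl
    · exact absurd rfl hpq
    · exact hnadj
    · exact fun hadj => hnadj hadj.symm
    · exact absurd rfl hpq
  -- conclude
  unfold indepNum
  apply le_antisymm
  · exact csSup_le ⟨2, hTwo⟩ (by rintro k ⟨s, hs, rfl⟩; exact upper s hs)
  · refine le_csSup ⟨2, ?_⟩ hTwo
    rintro k ⟨s, hs, rfl⟩; exact upper s hs
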